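/- The join L2^1 ∨ R2^1 has the finite basis {x ≈ x², xszx ≈ xsxzx} and equals the meet R3^1 ∧ L3^1. Precisely: (a) an identity u ≈ v is a consequence of {x ≈ x², xszx ≈ xsxzx} if and only if it holds both in L2^1 and in R2^1; and (b) a monoid satisfies {x ≈ x², xszx ≈ xsxzx} if and only if it satisfies both {x ≈ x², x₁x₂x₃ ≈ x₁x₂x₃x₁x₃x₂x₃} and {x ≈ x², x₃x₂x₁ ≈ x₃x₂x₃x₁x₃x₂x₁}. -/

import Mathlib

/-- A word over the fixed countably infinite alphabet ℕ. -/
abbrev Word : Type := List ℕ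

/-- An identity `u ≈ v` is a pair of words. -/
abbrev Eqn : Type := Word × Word

/-- A monoid `M` satisfies the identity `e` if every evaluation of letters in `M`
gives the same value to both sides. -/
def Satisfies (M : Type) [Monoid M] (e : Eqn) : Prop :=
  ∀ φ : ℕ → M, (e.1.map φ).prod = (e.2.map φ).prod

/-- A monoid `M` satisfies a set of identities `S` if it satisfies each member. -/
def SatisfiesSet (M : Type) [Monoid M] (S : Set Eqn) : Prop :=
  ∀ e ∈ S, Satisfies M e

/-- The identity `e` is a consequence of `S` (holds in the variety `var S`)
if every monoid satisfying `S` satisfies `e`. -/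
def Consequence (S : Set Eqn) (e : Eqn) : Prop :=
  ∀ (M : Type) [Monoid M], SatisfiesSet M S → Satisfies M e

-- Letters: `x = 0`, `y = 1`, `z = 2`, `s = 3`, `t = 4`.
/-- Basis of `L₂¹`: `{x ≈ x², xy ≈ xyx}`. -/
def L2Basis : Set Eqn := {([0], [0, 0]), ([0, 1], [0, 1, 0])}

/-- Basis of `R₂¹`: `{x ≈ x², xy ≈ yxy}`. -/
def R2Basis : Set Eqn := {([0], [0, 0]), ([0, 1], [1, 0, 1])}

/-- Basis of `R₃¹`: `{x ≈ x², x₁x₂x₃ ≈ x₁x₂x₃x₁x₃x₂x₃}` (letters `x₁ = 0`, `x₂ = 1`, `x₃ = 2`). -/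
def R3Basis : Set Eqn := {([0], [0, 0]), ([0, 1, 2], [0, 1, 2, 0, 2, 1, 2])}

/-- Basis of `L₃¹`: `{x ≈ x², x₃x₂x₁ ≈ x₃x₂x₃x₁x₃x₂x₁}`. -/
def L3Basis : Set Eqn := {([0], [0, 0]), ([2, 1, 0], [2, 1, 2, 0, 2, 1, 0])}


namespace S0

def F : List ℕ → List ℕ
  | [] => []
  | a :: l => a :: (F l).filter (fun x => decide (x ≠ a))

@[simp] lemma mem_F {x : ℕ} : ∀ {l : List ℕ}, x ∈ F l ↔ x ∈ l
  | [] => Iff.rfl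
  | a :: l => by
    simp only [F, List.mem_cons, List.mem_filter, decide_eq_true_eq, mem_F (l := l)]
    by_cases h : x = a <;> simp [h]

lemma F_snoc (w : List ℕ) (a : ℕ) :
    F (w ++ [a]) = if a ∈ w then F w else F w ++ [a] := by
  induction w with
  | nil => simp [F]
  | cons x w ih =>
    by_cases h : a ∈ x :: w
    · rcases List.mem_cons.1 h with h1 | h1
      · subst h1
        by_cases h2 : a ∈ w <;> simp [F, ih, h2, List.filter_append]
      · simp [F, ih, h1, List.mem_cons.1 h]
    · have h1 : a ∉ w := fun hc => h (List.mem_cons_of_mem _ hc)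
      have h2 : a ≠ x := fun hc => h (by simp [hc])
      simp [F, ih, h1, h, List.filter_append, h2]

def B (l : List ℕ) : List ℕ := (F l.reverse).reverse

@[simp] lemma mem_B {x : ℕ} {l : List ℕ} : x ∈ B l ↔ x ∈ l := by simp [B]

lemma B_cons (a : ℕ) (l : List ℕ) :
    B (a :: l) = if a ∈ l then B l else a :: B l := by
  simp only [B, List.reverse_cons, F_snoc, List.mem_reverse]
  by_cases h : a ∈ l <;> simp [h]

lemma filter_cons_self (a : ℕ) (w : List ℕ) :
    (a :: w).filter (fun x => decide (x ≠ a)) = w.filter (fun x => decide (x ≠ a)) := by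
  simp [List.filter_cons]

lemma filter_cons_ne {x a : ℕ} (h : x ≠ a) (w : List ℕ) :
    (x :: w).filter (fun b => decide (b ≠ a)) = x :: w.filter (fun b => decide (b ≠ a)) := by
  simp [List.filter_cons, h]

section Mon
variable {M : Type} [Monoid M]

def P (φ : ℕ → M) (w : List ℕ) : M := (w.map φ).prod

variable (φ : ℕ → M)

@[simp] lemma P_nil : P φ [] = 1 := rfl
@[simp] lemma P_cons (a : ℕ) (w : List ℕ) : P φ (a :: w) = φ a * P φ w := by simp [P]
@[simp] lemma P_append (s t : List ℕ) : P φ (s ++ t) = P φ s * P φ t := by simp [P]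

variable (hI : ∀ a : M, a * a = a) (hR : ∀ a b c : M, a * b * c * a = a * b * a * c * a)

include hR in
lemma L4 : ∀ (w : List ℕ) (a : ℕ) (u t : M),
    φ a * u * P φ w * φ a * t = φ a * u * P φ (w.filter (fun x => decide (x ≠ a))) * φ a * t := by
  intro w
  induction w with
  | nil => intro a u t; rfl
  | cons x w ih =>
    intro a u t
    by_cases h : x = a
    · subst h
      rw [filter_cons_self]
      have h1 := congrArg (· * t) (hR (φ x) u (P φ w))
      have h2 := ih x u t
      simp only [mul_assoc, P_cons] at h1 h2 ⊢
      exact h1.symm.trans h2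
    · rw [filter_cons_ne h]
      have h2 := ih a (u * φ x) t
      simp only [mul_assoc, P_cons] at h2 ⊢
      exact h2

include hI hR in
lemma L5 : ∀ u : List ℕ, P φ u = P φ (F u) * P φ u := by
  intro u
  induction u with
  | nil => simp [F]
  | cons a u ih =>
    have h4 := L4 φ hR (F u) a 1 (P φ u)
    calc P φ (a :: u) = φ a * P φ u := by simp
      _ = φ a * (P φ (F u) * P φ u) := by rw [← ih]
      _ = (φ a * P φ (F u)) * ((φ a * P φ (F u)) * P φ u) := by
            rw [← mul_assoc, ← mul_assoc, hI (φ a * P φ (F u))]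
      _ = φ a * 1 * P φ (F u) * φ a * (P φ (F u) * P φ u) := by simp [mul_assoc]
      _ = φ a * 1 * P φ (F u) * φ a * P φ u := by rw [← ih]
      _ = φ a * 1 * P φ ((F u).filter (fun x => decide (x ≠ a))) * φ a * P φ u := h4
      _ = P φ (F (a :: u)) * P φ (a :: u) := by simp [F, mul_assoc]

include hR in
lemma L6 : ∀ (m p q : List ℕ), (∀ x ∈ m, x ∈ p) → (∀ x ∈ m, x ∈ q) →
    P φ p * P φ m * P φ q = P φ p * P φ q := by
  intro m
  induction m with
  | nil => intro p q _ _; simp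
  | cons x m ih =>
    intro p q hp hq
    obtain ⟨p₁, p₂, rfl⟩ := List.append_of_mem (hp x (by simp))
    obtain ⟨q₁, q₂, rfl⟩ := List.append_of_mem (hq x (by simp))
    have key : P φ (p₁ ++ x :: p₂) * P φ (x :: m) * P φ (q₁ ++ x :: q₂)
        = P φ (p₁ ++ x :: p₂) * P φ m * P φ (q₁ ++ x :: q₂) := by
      have h1 := (hR (φ x) (P φ p₂) (P φ m * P φ q₁)).symm
      have h2 := congrArg (fun z => P φ p₁ * (z * P φ q₂)) h1
      simp only [mul_assoc] at h2
      simp only [P_append, P_cons, mul_assoc]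
      exact h2
    rw [key, ih _ _ (fun y hy => hp y (by simp [hy])) (fun y hy => hq y (by simp [hy]))]

include hI hR in
lemma L5' : ∀ u : List ℕ, P φ u = P φ u * P φ (B u) := by
  have hIN : ∀ a : Mᵐᵒᵖ, a * a = a := by
    intro a
    apply MulOpposite.unop_injective
    simp only [MulOpposite.unop_mul]
    exact hI _
  have hRN : ∀ a b c : Mᵐᵒᵖ, a * b * c * a = a * b * a * c * a := by
    intro a b c
    apply MulOpposite.unop_injective
    simp only [MulOpposite.unop_mul]
    have := hR a.unop c.unop b.unop
    simp only [mul_assoc] at this ⊢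
    exact this
  have hP : ∀ w : List ℕ, P (fun n => MulOpposite.op (φ n)) w = MulOpposite.op (P φ w.reverse) := by
    intro w
    induction w with
    | nil => simp
    | cons a w ih =>
      simp only [P_cons, ih, List.reverse_cons, P_append, P_cons, P_nil, mul_one,
        ← MulOpposite.op_mul]
  intro u
  have h5 := L5 (fun n => MulOpposite.op (φ n)) hIN hRN u.reverse
  rw [hP, hP, List.reverse_reverse] at h5
  apply MulOpposite.op_injective
  rw [MulOpposite.op_mul]
  exact h5

include hI hR in
lemma Key (u : List ℕ) : P φ u = P φ (F u) * P φ (B u) := by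
  calc P φ u = P φ (F u) * P φ u := L5 φ hI hR u
    _ = P φ (F u) * (P φ u * P φ (B u)) := by rw [← L5' φ hI hR]
    _ = P φ (F u) * P φ u * P φ (B u) := by rw [mul_assoc]
    _ = P φ (F u) * P φ (B u) :=
        L6 φ hR u (F u) (B u) (fun x hx => mem_F.2 hx) (fun x hx => mem_B.2 hx)

end Mon

/-- the free left-regular-band monoid on ℕ -/
structure FOM where
  toList : List ℕ

instance : Monoid FOM where
  one := ⟨[]⟩
  mul u v := ⟨u.toList ++ v.toList.filter (fun x => decide (x ∉ u.toList))⟩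
  one_mul u := by
    obtain ⟨u⟩ := u
    show FOM.mk ([] ++ u.filter (fun x => decide (x ∉ ([] : List ℕ)))) = ⟨u⟩
    simp
  mul_one u := by
    obtain ⟨u⟩ := u
    show FOM.mk (u ++ List.filter (fun x => decide (x ∉ u)) []) = ⟨u⟩
    simp
  mul_assoc u v w := by
    obtain ⟨u⟩ := u; obtain ⟨v⟩ := v; obtain ⟨w⟩ := w
    show FOM.mk ((u ++ v.filter (fun x => decide (x ∉ u))) ++
        w.filter (fun x => decide (x ∉ u ++ v.filter (fun x => decide (x ∉ u))))) =
      FOM.mk (u ++ (v ++ w.filter (fun x => decide (x ∉ v))).filter (fun x => decide (x ∉ u)))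
    apply congrArg FOM.mk
    simp only [List.append_assoc, List.filter_append, List.filter_filter]
    congr 1
    congr 1
    apply List.filter_congr
    intro x _
    by_cases h1 : x ∈ u <;> by_cases h2 : x ∈ v <;> simp [h1, h2]

lemma FOM_mul (u v : List ℕ) :
    (⟨u⟩ : FOM) * ⟨v⟩ = ⟨u ++ v.filter (fun x => decide (x ∉ u))⟩ := rfl

lemma FOM_idem (u : FOM) : u * u = u := by
  obtain ⟨u⟩ := u
  rw [FOM_mul]
  have h : (List.filter (fun x => decide (x ∉ u)) u) = [] :=
    List.filter_eq_nil_iff.2 (fun a ha => by simp [ha])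
  rw [h, List.append_nil]

lemma FOM_absorb (u v : FOM) : u * v * u = u * v := by
  obtain ⟨u⟩ := u; obtain ⟨v⟩ := v
  rw [FOM_mul, FOM_mul]
  have h : (List.filter (fun x => decide (x ∉ u ++ List.filter (fun x => decide (x ∉ u)) v)) u) = [] :=
    List.filter_eq_nil_iff.2 (fun a ha => by simp [ha])
  rw [h, List.append_nil]

lemma FOM_prod (w : List ℕ) :
    (List.map (fun c => (⟨[c]⟩ : FOM)) w).prod = ⟨F w⟩ := by
  induction w with
  | nil => rfl
  | cons a w ih =>
    rw [List.map_cons, List.prod_cons, ih, FOM_mul]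
    apply congrArg FOM.mk
    rw [show F (a :: w) = a :: (F w).filter (fun x => decide (x ≠ a)) from rfl,
      List.singleton_append]
    congr 1
    congr 1
    funext x
    simp

/-- the free right-regular-band monoid on ℕ -/
structure LOM where
  toList : List ℕ

instance : Monoid LOM where
  one := ⟨[]⟩
  mul u v := ⟨u.toList.filter (fun x => decide (x ∉ v.toList)) ++ v.toList⟩
  one_mul u := by
    obtain ⟨u⟩ := u
    show LOM.mk (List.filter (fun x => decide (x ∉ u)) [] ++ u) = ⟨u⟩
    simp
  mul_one u := by
    obtain ⟨u⟩ := u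
    show LOM.mk (u.filter (fun x => decide (x ∉ ([] : List ℕ))) ++ []) = ⟨u⟩
    simp
  mul_assoc u v w := by
    obtain ⟨u⟩ := u; obtain ⟨v⟩ := v; obtain ⟨w⟩ := w
    show LOM.mk ((u.filter (fun x => decide (x ∉ v)) ++ v).filter (fun x => decide (x ∉ w)) ++ w) =
      LOM.mk (u.filter (fun x => decide (x ∉ v.filter (fun x => decide (x ∉ w)) ++ w)) ++
        (v.filter (fun x => decide (x ∉ w)) ++ w))
    apply congrArg LOM.mk
    simp only [List.filter_append, List.filter_filter, List.append_assoc]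
    congr 1
    apply List.filter_congr
    intro x _
    by_cases h1 : x ∈ v <;> by_cases h2 : x ∈ w <;> simp [h1, h2]

lemma LOM_mul (u v : List ℕ) :
    (⟨u⟩ : LOM) * ⟨v⟩ = ⟨u.filter (fun x => decide (x ∉ v)) ++ v⟩ := rfl

lemma LOM_idem (u : LOM) : u * u = u := by
  obtain ⟨u⟩ := u
  rw [LOM_mul]
  have h : (List.filter (fun x => decide (x ∉ u)) u) = [] :=
    List.filter_eq_nil_iff.2 (fun a ha => by simp [ha])
  rw [h, List.nil_append]

lemma LOM_absorb (u v : LOM) : v * (u * v) = u * v := by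
  obtain ⟨u⟩ := u; obtain ⟨v⟩ := v
  rw [LOM_mul, LOM_mul]
  have h : (List.filter (fun x => decide (x ∉ List.filter (fun x => decide (x ∉ v)) u ++ v)) v) = [] :=
    List.filter_eq_nil_iff.2 (fun a ha => by simp [ha])
  rw [h, List.nil_append]

lemma LOM_prod (w : List ℕ) :
    (List.map (fun c => (⟨[c]⟩ : LOM)) w).prod = ⟨B w⟩ := by
  induction w with
  | nil => rfl
  | cons a w ih =>
    rw [List.map_cons, List.prod_cons, ih, LOM_mul]
    apply congrArg LOM.mk
    rw [B_cons]
    by_cases h : a ∈ w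
    · have : a ∈ B w := mem_B.2 h
      simp [h, this]
    · have : a ∉ B w := fun hc => h (mem_B.1 hc)
      simp [h, this]



lemma getI {M : Type} [Monoid M] (h : Satisfies M ([0], [0, 0])) : ∀ a : M, a * a = a := by
  intro a
  have h1 := h (fun _ => a)
  simp only [Satisfies, List.map_cons, List.map_nil, List.prod_cons, List.prod_nil, mul_one] at h1
  exact h1.symm

lemma getR {M : Type} [Monoid M] (h : Satisfies M ([0, 3, 2, 0], [0, 3, 0, 2, 0])) :
    ∀ a b c : M, a * b * c * a = a * b * a * c * a := by
  intro a b c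
  have h1 := h (fun n => if n = 0 then a else if n = 3 then b else c)
  simp only [List.map_cons, List.map_nil, List.prod_cons, List.prod_nil, mul_one] at h1
  norm_num at h1
  simp only [mul_assoc]
  exact h1

lemma satFOM : SatisfiesSet FOM L2Basis := by
  intro i hi
  simp only [L2Basis, Set.mem_insert_iff, Set.mem_singleton_iff] at hi
  rcases hi with rfl | rfl
  · intro φ
    simp only [List.map_cons, List.map_nil, List.prod_cons, List.prod_nil, mul_one]
    exact (FOM_idem _).symm
  · intro φ
    simp only [List.map_cons, List.map_nil, List.prod_cons, List.prod_nil, mul_one]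
    rw [← mul_assoc]
    exact (FOM_absorb _ _).symm

lemma satLOM : SatisfiesSet LOM R2Basis := by
  intro i hi
  simp only [R2Basis, Set.mem_insert_iff, Set.mem_singleton_iff] at hi
  rcases hi with rfl | rfl
  · intro φ
    simp only [List.map_cons, List.map_nil, List.prod_cons, List.prod_nil, mul_one]
    exact (LOM_idem _).symm
  · intro φ
    simp only [List.map_cons, List.map_nil, List.prod_cons, List.prod_nil, mul_one]
    exact (LOM_absorb _ _).symm

end S0

open S0 in
/-- `L₂¹ ∨ R₂¹` has finite basis `{x ≈ x², xszx ≈ xsxzx}`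
(`x = 0`, `z = 2`, `s = 3`) and equals `R₃¹ ∧ L₃¹`:
(a) an identity is a consequence of this basis iff it holds in both `L₂¹` and `R₂¹`;
(b) a monoid satisfies this basis iff it satisfies the bases of both `R₃¹` and `L₃¹`. -/
theorem statement0 :
    (∀ e : Eqn,
      Consequence ({([0], [0, 0]), ([0, 3, 2, 0], [0, 3, 0, 2, 0])} : Set Eqn) e ↔
        (Consequence L2Basis e ∧ Consequence R2Basis e)) ∧
    (∀ (M : Type) [Monoid M],
      SatisfiesSet M ({([0], [0, 0]), ([0, 3, 2, 0], [0, 3, 0, 2, 0])} : Set Eqn) ↔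
        (SatisfiesSet M R3Basis ∧ SatisfiesSet M L3Basis)) := by
  constructor
  · -- part (a)
    intro e
    constructor
    · intro hB
      constructor
      · -- L2 consequence
        intro M _ hL2
        apply hB
        intro i hi
        simp only [Set.mem_insert_iff, Set.mem_singleton_iff] at hi
        rcases hi with rfl | rfl
        · exact hL2 ([0], [0, 0]) (Set.mem_insert _ _)
        · intro φ
          have hxy := hL2 ([0, 1], [0, 1, 0]) (Set.mem_insert_of_mem _ rfl)
            (fun n => if n = 0 then φ 0 else φ 3)
          simp only [List.map_cons, List.map_nil, List.prod_cons, List.prod_nil, mul_one] at hxy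
          norm_num at hxy
          have h2 := congrArg (fun z => z * (φ 2 * φ 0)) hxy
          simp only [mul_assoc] at h2
          simp only [List.map_cons, List.map_nil, List.prod_cons, List.prod_nil, mul_one]
          simpa [mul_assoc] using h2
      · -- R2 consequence
        intro M _ hR2
        apply hB
        intro i hi
        simp only [Set.mem_insert_iff, Set.mem_singleton_iff] at hi
        rcases hi with rfl | rfl
        · exact hR2 ([0], [0, 0]) (Set.mem_insert _ _)
        · intro φ
          have hxy := hR2 ([0, 1], [1, 0, 1]) (Set.mem_insert_of_mem _ rfl)
            (fun n => if n = 0 then φ 2 else φ 0)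
          simp only [List.map_cons, List.map_nil, List.prod_cons, List.prod_nil, mul_one] at hxy
          norm_num at hxy
          have h2 := congrArg (fun z => φ 0 * (φ 3 * z)) hxy
          simp only [List.map_cons, List.map_nil, List.prod_cons, List.prod_nil, mul_one]
          simpa [mul_assoc] using h2
    · rintro ⟨hL2, hR2⟩
      have hF : F e.1 = F e.2 := by
        have h := hL2 FOM satFOM (fun c => (⟨[c]⟩ : FOM))
        rw [FOM_prod, FOM_prod] at h
        exact congrArg FOM.toList h
      have hBB : B e.1 = B e.2 := by
        have h := hR2 LOM satLOM (fun c => (⟨[c]⟩ : LOM))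
        rw [LOM_prod, LOM_prod] at h
        exact congrArg LOM.toList h
      intro M _ hS
      have hI := getI (hS _ (Set.mem_insert _ _))
      have hR := getR (hS _ (Set.mem_insert_of_mem _ rfl))
      intro φ
      show P φ e.1 = P φ e.2
      have h1 := Key φ hI hR e.1
      rw [hF, hBB] at h1
      exact h1.trans (Key φ hI hR e.2).symm
  · -- part (b)
    intro M _
    constructor
    · intro hS
      have hI := getI (hS _ (Set.mem_insert _ _))
      have hR := getR (hS _ (Set.mem_insert_of_mem _ rfl))
      constructor
      · intro i hi
        simp only [R3Basis, Set.mem_insert_iff, Set.mem_singleton_iff] at hi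
        rcases hi with rfl | rfl
        · exact hS _ (Set.mem_insert _ _)
        · intro φ
          show P φ [0, 1, 2] = P φ [0, 1, 2, 0, 2, 1, 2]
          have h1 := Key φ hI hR [0, 1, 2]
          have h2 := Key φ hI hR [0, 1, 2, 0, 2, 1, 2]
          rw [show F [0, 1, 2, 0, 2, 1, 2] = F [0, 1, 2] from rfl,
            show B [0, 1, 2, 0, 2, 1, 2] = B [0, 1, 2] from rfl] at h2
          exact h1.trans h2.symm
      · intro i hi
        simp only [L3Basis, Set.mem_insert_iff, Set.mem_singleton_iff] at hi
        rcases hi with rfl | rfl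
        · exact hS _ (Set.mem_insert _ _)
        · intro φ
          show P φ [2, 1, 0] = P φ [2, 1, 2, 0, 2, 1, 0]
          have h1 := Key φ hI hR [2, 1, 0]
          have h2 := Key φ hI hR [2, 1, 2, 0, 2, 1, 0]
          rw [show F [2, 1, 2, 0, 2, 1, 0] = F [2, 1, 0] from rfl,
            show B [2, 1, 2, 0, 2, 1, 0] = B [2, 1, 0] from rfl] at h2
          exact h1.trans h2.symm
    · rintro ⟨h3, h3'⟩
      have hI := getI (h3 _ (Set.mem_insert _ _))
      have hI2 : ∀ x y : M, x * (x * y) = x * y := fun x y => by rw [← mul_assoc, hI]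
      have hR3 : ∀ a b c : M, a * (b * c) = a * (b * (c * (a * (c * (b * c))))) := by
        intro a b c
        have h1 := h3 _ (Set.mem_insert_of_mem _ rfl)
          (fun n => if n = 0 then a else if n = 1 then b else c)
        simp only [List.map_cons, List.map_nil, List.prod_cons, List.prod_nil, mul_one] at h1
        norm_num at h1
        simpa [mul_assoc] using h1
      have hL3 : ∀ a b c : M, a * (b * c) = a * (b * (a * (c * (a * (b * c))))) := by
        intro a b c
        have h1 := h3' _ (Set.mem_insert_of_mem _ rfl)
          (fun n => if n = 0 then c else if n = 1 then b else a)
        simp only [List.map_cons, List.map_nil, List.prod_cons, List.prod_nil, mul_one] at h1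
        norm_num at h1
        simpa [mul_assoc] using h1
      intro i hi
      simp only [Set.mem_insert_iff, Set.mem_singleton_iff] at hi
      rcases hi with rfl | rfl
      · exact h3 _ (Set.mem_insert _ _)
      · intro φ
        simp only [List.map_cons, List.map_nil, List.prod_cons, List.prod_nil, mul_one]
        set a := φ 0 with ha
        set b := φ 3 with hb
        set c := φ 2 with hc
        have e1 := hL3 a b (c * a)
        simp only [mul_assoc] at e1
        rw [hI2] at e1
        have e2 := hR3 (a * b) a (c * a)
        simp only [mul_assoc] at e2
        rw [hI2, hI2] at e2
        have hcc : c * (a * (c * a)) = c * a := by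
          have h := hI (c * a)
          simpa [mul_assoc] using h
        rw [hcc] at e2
        exact e1.trans e2.symm
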